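/- Linear algebra lemma underlying the graded Selmer bound: let B = B_1 ⊃ B_2 ⊃ ... ⊃ B_N ⊃ B_{N+1} = 0 be a finite filtered vector space, A ⊂ B a strict filtered subspace (A_i = A ∩ B_i), and suppose given vector spaces C_{i,j} (i < j) with linear maps φ_{i,j}: C_{i,j} → B_i/B_j fitting into commutative diagrams where 0 → C_{j,k} → C_{i,k} → C_{i,j} is exact over the exact rows 0 → B_j/B_k → B_i/B_k → B_i/B_j → 0. Then for all i < j: dim(φ_{i,j}(C_{i,j}) ∩ (A_i/A_j)) ≤ Σ_{i≤k<j} dim(φ_{k,k+1}(C_{k,k+1}) ∩ (A_k/A_{k+1})) + Σ_{i<k<j} dim Ker(φ_{k-1,k}). -/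
import Mathlib

open Module Submodule LinearMap

lemma aux_rank_nullity {F M N : Type*} [Field F] [AddCommGroup M] [Module F M]
    [AddCommGroup N] [Module F N] [FiniteDimensional F M]
    (f : M →ₗ[F] N) (V : Submodule F M) :
    finrank F (V.map f) + finrank F ↥(V ⊓ LinearMap.ker f) = finrank F V := by
  have h := LinearMap.finrank_range_add_finrank_ker (f.domRestrict V)
  rw [LinearMap.range_domRestrict, LinearMap.ker_domRestrict] at h
  have e1 : Submodule.comap V.subtype (LinearMap.ker f)
      = Submodule.comap V.subtype (V ⊓ LinearMap.ker f) := by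
    rw [Submodule.comap_inf, Submodule.comap_subtype_self, top_inf_eq]
  rw [e1, (Submodule.comapSubtypeEquivOfLe
      (inf_le_left : V ⊓ LinearMap.ker f ≤ V)).finrank_eq] at h
  exact h



/-!
STATEMENT 7 (linear algebra lemma underlying the graded Selmer bound).  `M i j` stands for
the subquotient `B_i/B_j` of a filtered vector space `B = B_1 ⊃ ... ⊃ B_{N+1} = 0`, with
projections `p i j k : B_i/B_k → B_i/B_j` and inclusions `ι i j k : B_j/B_k → B_i/B_k`
forming exact rows; `A i j ⊆ M i j` is the subquotient `A_i/A_j` of a strict filtered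
subspace `A ⊆ B` (strictness is encoded by `hpA`, `hιA`, `hιA'`); `φ i j : C i j → B_i/B_j`
are linear maps compatible with an exact family `0 → C_{j,k} → C_{i,k} → C_{i,j}` over the
rows.  Conclusion: for all `i < j`,
`dim (φ_{i,j}(C_{i,j}) ∩ A_i/A_j)
   ≤ Σ_{i ≤ k < j} dim (φ_{k,k+1}(C_{k,k+1}) ∩ A_k/A_{k+1}) + Σ_{i < k < j} dim ker φ_{k-1,k}`.
-/
theorem stmt_7 (F : Type*) [Field F]
    (M : ℕ → ℕ → Type*) [∀ i j, AddCommGroup (M i j)] [∀ i j, Module F (M i j)]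
    [∀ i j, FiniteDimensional F (M i j)]
    (C : ℕ → ℕ → Type*) [∀ i j, AddCommGroup (C i j)] [∀ i j, Module F (C i j)]
    [∀ i j, FiniteDimensional F (C i j)]
    (p : ∀ i j k, M i k →ₗ[F] M i j)
    (ι : ∀ i j k, M j k →ₗ[F] M i k)
    (A : ∀ i j, Submodule F (M i j))
    (φ : ∀ i j, C i j →ₗ[F] M i j)
    (c : ∀ i j k, C i k →ₗ[F] C i j)
    (cι : ∀ i j k, C j k →ₗ[F] C i k)
    -- exact rows  0 → B_j/B_k → B_i/B_k → B_i/B_j → 0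
    (hι_inj : ∀ i j k, i < j → j < k → Function.Injective (ι i j k))
    (hp_surj : ∀ i j k, i < j → j < k → Function.Surjective (p i j k))
    (hexact : ∀ i j k, i < j → j < k → LinearMap.range (ι i j k) = LinearMap.ker (p i j k))
    -- exactness of  0 → C_{j,k} → C_{i,k} → C_{i,j}
    (hcι_inj : ∀ i j k, i < j → j < k → Function.Injective (cι i j k))
    (hCexact : ∀ i j k, i < j → j < k → LinearMap.range (cι i j k) = LinearMap.ker (c i j k))
    -- commutativity of the diagrams
    (hφp : ∀ i j k, i < j → j < k → (p i j k) ∘ₗ (φ i k) = (φ i j) ∘ₗ (c i j k))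
    (hφι : ∀ i j k, i < j → j < k → (ι i j k) ∘ₗ (φ j k) = (φ i k) ∘ₗ (cι i j k))
    -- the filtration on A is induced from B and strict
    (hpA : ∀ i j k, i < j → j < k → (A i k).map (p i j k) = A i j)
    (hιA : ∀ i j k, i < j → j < k → (A i k).comap (ι i j k) = A j k)
    (hιA' : ∀ i j k, i < j → j < k → (A j k).map (ι i j k) ≤ A i k) :
    ∀ i j, i < j →
      Module.finrank F ↥(LinearMap.range (φ i j) ⊓ A i j) ≤
        (∑ k ∈ Finset.Ico i j,
          Module.finrank F ↥(LinearMap.range (φ k (k + 1)) ⊓ A k (k + 1))) +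
        ∑ k ∈ Finset.Ico i (j - 1), Module.finrank F ↥(LinearMap.ker (φ k (k + 1))) := by
  -- Key intermediate claim
  have claim : ∀ i m j, i < m → m < j →
      finrank F ↥(LinearMap.range (φ i j) ⊓ A i j ⊓ LinearMap.ker (p i m j)) ≤
        finrank F ↥(LinearMap.ker (φ i m)) +
          finrank F ↥(LinearMap.range (φ m j) ⊓ A m j) := by
    intro i m j him hmj
    set K : Submodule F (M i j) :=
      LinearMap.range (φ i j) ⊓ A i j ⊓ LinearMap.ker (p i m j) with hK
    set S : Submodule F (C i j) := Submodule.comap (φ i j) K with hS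
    have hKle : K ≤ LinearMap.range (φ i j) := le_trans inf_le_left inf_le_left
    have hmapS : S.map (φ i j) = K := by
      rw [hS, Submodule.map_comap_eq, inf_eq_right.mpr hKle]
    set f : ↥S →ₗ[F] M i j := (φ i j).domRestrict S with hf
    set g : ↥S →ₗ[F] C i m := (c i m j).domRestrict S with hg
    have h1 : finrank F ↥(LinearMap.range f) + finrank F ↥(LinearMap.ker f)
        = finrank F ↥S := LinearMap.finrank_range_add_finrank_ker f
    have h2 : finrank F ↥(LinearMap.range g) + finrank F ↥(LinearMap.ker g)
        = finrank F ↥S := LinearMap.finrank_range_add_finrank_ker g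
    set T : Submodule F ↥S := LinearMap.ker g with hT
    have h3 := aux_rank_nullity f T
    have h4 : finrank F ↥(T ⊓ LinearMap.ker f) ≤ finrank F ↥(LinearMap.ker f) :=
      Submodule.finrank_mono inf_le_right
    have h5 : LinearMap.range g ≤ LinearMap.ker (φ i m) := by
      rintro x ⟨⟨z, hz⟩, rfl⟩
      have hz' : φ i j z ∈ K := hz
      have hker : φ i j z ∈ LinearMap.ker (p i m j) := hz'.2
      have hcomm := LinearMap.congr_fun (hφp i m j him hmj) z
      simp only [LinearMap.comp_apply] at hcomm
      simp only [LinearMap.mem_ker, hg, LinearMap.domRestrict_apply]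
      rw [← hcomm]
      exact hker
    have h5' : finrank F ↥(LinearMap.range g) ≤ finrank F ↥(LinearMap.ker (φ i m)) :=
      Submodule.finrank_mono h5
    have h6 : T.map f ≤ (LinearMap.range (φ m j) ⊓ A m j).map (ι i m j) := by
      rintro x ⟨⟨z, hzS⟩, hzT, rfl⟩
      have hcz : c i m j z = 0 := hzT
      have hzrange : z ∈ LinearMap.range (cι i m j) := by
        rw [hCexact i m j him hmj]; exact hcz
      obtain ⟨w, rfl⟩ := hzrange
      have hcomm := LinearMap.congr_fun (hφι i m j him hmj) w
      simp only [LinearMap.comp_apply] at hcomm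
      have hzK : φ i j (cι i m j w) ∈ K := hzS
      have hA : φ m j w ∈ A m j := by
        rw [← hιA i m j him hmj]
        show ι i m j (φ m j w) ∈ A i j
        rw [hcomm]
        exact hzK.1.2
      exact ⟨φ m j w, ⟨⟨w, rfl⟩, hA⟩, by simp [hf, LinearMap.domRestrict_apply, hcomm]⟩
    have h6' : finrank F ↥(T.map f) ≤
        finrank F ↥(LinearMap.range (φ m j) ⊓ A m j) :=
      le_trans (Submodule.finrank_mono h6) (Submodule.finrank_map_le _ _)
    have hKf : finrank F ↥K = finrank F ↥(LinearMap.range f) := by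
      rw [hf, LinearMap.range_domRestrict, hmapS]
    omega
  have main : ∀ (n i j : ℕ), i < j → j - i = n →
      finrank F ↥(LinearMap.range (φ i j) ⊓ A i j) ≤
        (∑ k ∈ Finset.Ico i j,
          finrank F ↥(LinearMap.range (φ k (k + 1)) ⊓ A k (k + 1))) +
        ∑ k ∈ Finset.Ico i (j - 1), finrank F ↥(LinearMap.ker (φ k (k + 1))) := by
    intro n
    induction n with
    | zero => intro i j hij h; omega
    | succ n ih =>
      intro i j hij h
      by_cases hj : j = i + 1
      · subst hj
        rw [Nat.add_sub_cancel, Finset.Ico_self, Finset.sum_empty, add_zero,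
          Nat.Ico_succ_singleton, Finset.sum_singleton]
      · have hmj : i + 1 < j := by omega
        have him : i < i + 1 := Nat.lt_succ_self i
        have h0 := aux_rank_nullity (p i (i+1) j) (LinearMap.range (φ i j) ⊓ A i j)
        have hVle : (LinearMap.range (φ i j) ⊓ A i j).map (p i (i+1) j) ≤
            LinearMap.range (φ i (i+1)) ⊓ A i (i+1) := by
          rintro x ⟨y, ⟨⟨z, rfl⟩, hyA⟩, rfl⟩
          constructor
          · refine ⟨c i (i+1) j z, ?_⟩
            have := LinearMap.congr_fun (hφp i (i+1) j him hmj) z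
            simp only [LinearMap.comp_apply] at this
            exact this.symm
          · rw [← hpA i (i+1) j him hmj]
            exact ⟨φ i j z, hyA, rfl⟩
        have h0' := Submodule.finrank_mono hVle
        have h1 := claim i (i+1) j him hmj
        have h2 := ih (i+1) j hmj (by omega)
        rw [Finset.sum_eq_sum_Ico_succ_bot hij,
          Finset.sum_eq_sum_Ico_succ_bot (show i < j - 1 by omega)]
        omega
  exact fun i j hij => main (j - i) i j hij rfl
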